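/- (Lemma 2.1(ii), boundedness) Every iterate x^k lies in the level set {x : F(x,0) ≤ F(x⁰, ε⁰)}; in particular the sequence {x^k} is bounded. -/

import Mathlib

open Filter
open scoped BigOperators InnerProductSpace

noncomputable section

/-- Real n-dimensional Euclidean space. -/
abbrev Vec (n : ℕ) := EuclideanSpace ℝ (Fin n)

/-- The smoothed objective `F(x, ε) = f(x) + λ ∑ᵢ (|xᵢ| + εᵢ)^p`. -/
def Fobj (n : ℕ) (p lam : ℝ) (f : Vec n → ℝ) (z : Vec n) (ε : Fin n → ℝ) : ℝ :=
  f z + lam * ∑ i, (|z i| + ε i) ^ p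

/-- The merit function `ψ(x, y, ε) = F(x, ε) + (β/2)‖x − y‖²`. -/
def psiObj (n : ℕ) (p lam β : ℝ) (f : Vec n → ℝ) (z y : Vec n) (ε : Fin n → ℝ) : ℝ :=
  Fobj n p lam f z ε + β / 2 * ‖z - y‖ ^ 2

/-- The weighted-ℓ₁ subproblem objective at iteration `k`:
`⟨∇f(yₖ), z⟩ + (β/2)‖z − yₖ‖² + λ ∑ᵢ wᵢᵏ |zᵢ|` with `wᵢᵏ = p(|xᵢᵏ| + εᵢᵏ)^{p−1}`. -/
def subObj (n : ℕ) (p lam β : ℝ) (f : Vec n → ℝ) (xk yk : Vec n) (εk : Fin n → ℝ)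
    (z : Vec n) : ℝ :=
  ⟪gradient f yk, z⟫_ℝ + β / 2 * ‖z - yk‖ ^ 2
    + lam * ∑ i, (p * (|xk i| + εk i) ^ (p - 1)) * |z i|

/-- All the hypotheses of the EIRL1 algorithm (Algorithm 1) together with
Assumption 2.1.  The convention `x⁻¹ = x⁰` is encoded through truncated
subtraction on ℕ (`x (k-1) = x 0` for `k = 0`). -/
structure EIRL1 (n : ℕ) (p lam β Lf μ αbar : ℝ) (f : Vec n → ℝ)
    (x y : ℕ → Vec n) (ε : ℕ → Fin n → ℝ) (α : ℕ → ℝ) : Prop where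
  hn : 1 ≤ n
  hp0 : 0 < p
  hp1 : p < 1
  hlam : 0 < lam
  hμ0 : 0 < μ
  hμ1 : μ < 1
  hLf : 0 ≤ Lf
  hβ : Lf < β
  hconv : ConvexOn ℝ Set.univ f
  hdiff : ContDiff ℝ 1 f
  hlip : ∀ a b, ‖gradient f a - gradient f b‖ ≤ Lf * ‖a - b‖
  hαbar0 : 0 ≤ αbar
  hαbar1 : αbar < 1
  hα0 : ∀ k, 0 ≤ α k
  hα1 : ∀ k, α k ≤ αbar
  hε0 : ∀ i, 0 < ε 0 i
  hεpos : ∀ k i, 0 < ε (k + 1) i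
  hεdec : ∀ k i, ε (k + 1) i ≤ μ * ε k i
  hy : ∀ k, y k = x k + α k • (x k - x (k - 1))
  hmin : ∀ k z, z ≠ x (k + 1) →
    subObj n p lam β f (x k) (y k) (ε k) (x (k + 1)) < subObj n p lam β f (x k) (y k) (ε k) z
  hlevel : Bornology.IsBounded {z : Vec n | Fobj n p lam f z 0 ≤ Fobj n p lam f (x 0) (ε 0)}


section Aux
open Set

lemma rpow_concave_ineq {t s p : ℝ} (ht : 0 < t) (hs : 0 ≤ s) (hp0 : 0 ≤ p) (hp1 : p ≤ 1) :
    s ^ p ≤ t ^ p + p * t ^ (p - 1) * (s - t) := by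
  have hst : -1 ≤ (s - t) / t := by
    rw [le_div_iff₀ ht]; linarith
  have h := rpow_one_add_le_one_add_mul_self hst hp0 hp1
  have h1 : (1 : ℝ) + (s - t) / t = s / t := by field_simp; ring
  rw [h1] at h
  have hdiv : (s / t) ^ p = s ^ p / t ^ p := Real.div_rpow hs ht.le p
  rw [hdiv] at h
  have htp : (0:ℝ) < t ^ p := Real.rpow_pos_of_pos ht p
  have h2 : s ^ p ≤ (1 + p * ((s - t) / t)) * t ^ p := by
    rw [div_le_iff₀ htp] at h; linarith
  have h3 : t ^ (p - 1) = t ^ p / t := by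
    rw [Real.rpow_sub ht, Real.rpow_one]
  rw [h3]
  have : (1 + p * ((s - t) / t)) * t ^ p = t ^ p + p * (t ^ p / t) * (s - t) := by
    field_simp
  linarith [h2, this.symm.le]


lemma line_hasDerivAt {n : ℕ} (f : Vec n → ℝ) (hdiff : ContDiff ℝ 1 f) (a u : Vec n) (t : ℝ) :
    HasDerivAt (fun s : ℝ => f (a + s • u)) ⟪gradient f (a + t • u), u⟫_ℝ t := by
  have hline : HasDerivAt (fun s : ℝ => a + s • u) u t := by
    simpa using ((hasDerivAt_id t).smul_const u).const_add a
  have hg : HasGradientAt f (gradient f (a + t • u)) (a + t • u) :=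
    (hdiff.differentiable one_ne_zero (a + t • u)).hasGradientAt
  have hF := (hasGradientAt_iff_hasFDerivAt.mp hg).comp_hasDerivAt t hline
  have hF' : HasDerivAt (fun s : ℝ => f (a + s • u)) (((InnerProductSpace.toDual ℝ (Vec n)) (gradient f (a + t • u))) u) t := hF
  simpa using hF'

lemma conv_grad {n : ℕ} {f : Vec n → ℝ} (hconv : ConvexOn ℝ Set.univ f)
    (hdiff : ContDiff ℝ 1 f) (a b : Vec n) :
    f a + ⟪gradient f a, b - a⟫_ℝ ≤ f b := by
  set u := b - a with hu
  set h : ℝ → ℝ := fun s => f (a + s • u) with hh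
  have hd0 : HasDerivAt h ⟪gradient f a, u⟫_ℝ 0 := by
    simpa using line_hasDerivAt f hdiff a u 0
  have hslope : Filter.Tendsto (slope h 0) (nhdsWithin 0 {(0:ℝ)}ᶜ) (nhds ⟪gradient f a, u⟫_ℝ) :=
    hasDerivAt_iff_tendsto_slope.mp hd0
  have hslope' : Filter.Tendsto (slope h 0) (nhdsWithin 0 (Ioi 0)) (nhds ⟪gradient f a, u⟫_ℝ) :=
    hslope.mono_left (nhdsWithin_mono 0 (fun t ht => ne_of_gt ht))
  have hbound : ∀ t ∈ Ioc (0:ℝ) 1, slope h 0 t ≤ h 1 - h 0 := by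
    intro t ht
    have h1 : h t ≤ (1 - t) * h 0 + t * h 1 := by
      have := hconv.2 (Set.mem_univ (a + (0:ℝ) • u)) (Set.mem_univ (a + (1:ℝ) • u))
        (by linarith [ht.2] : (0:ℝ) ≤ 1 - t) ht.1.le (by ring)
      have heq : (1 - t) • (a + (0:ℝ) • u) + t • (a + (1:ℝ) • u) = a + t • u := by
        module
      rw [heq] at this
      simpa [hh, smul_eq_mul] using this
    have : slope h 0 t = (h t - h 0) / t := by simp [slope_def_field]
    rw [this, div_le_iff₀ ht.1]
    nlinarith [ht.1, ht.2]
  have hle : ⟪gradient f a, u⟫_ℝ ≤ h 1 - h 0 := by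
    refine le_of_tendsto hslope' ?_
    filter_upwards [Ioc_mem_nhdsGT_of_mem (Set.left_mem_Ico.mpr one_pos)] with t ht
      using hbound t ht
  have h0 : h 0 = f a := by simp [hh]
  have h1 : h 1 = f b := by simp [hh, hu]
  linarith

lemma descent_lemma {n : ℕ} {f : Vec n → ℝ} (hdiff : ContDiff ℝ 1 f) {L : ℝ} (hL : 0 ≤ L)
    (hlip : ∀ a b, ‖gradient f a - gradient f b‖ ≤ L * ‖a - b‖) (a b : Vec n) :
    f b ≤ f a + ⟪gradient f a, b - a⟫_ℝ + L / 2 * ‖b - a‖ ^ 2 := by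
  set u := b - a with hu
  set g : ℝ → ℝ := fun t => ⟪gradient f (a + t • u), u⟫_ℝ with hg
  have hgradlip : LipschitzWith (Real.toNNReal L) (gradient f) := by
    apply LipschitzWith.of_dist_le_mul
    intro p q
    rw [dist_eq_norm, dist_eq_norm]
    simpa [Real.coe_toNNReal L hL] using hlip p q
  have hgcont : Continuous g := by
    apply Continuous.inner
    · exact hgradlip.continuous.comp (by continuity)
    · exact continuous_const
  have hftc : ∫ t in (0:ℝ)..1, g t = f (a + (1:ℝ) • u) - f (a + (0:ℝ) • u) :=
    intervalIntegral.integral_eq_sub_of_hasDerivAt (f := fun s : ℝ => f (a + s • u))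
      (fun t _ => line_hasDerivAt f hdiff a u t) (hgcont.intervalIntegrable 0 1)
  have hbound : ∀ t ∈ Icc (0:ℝ) 1, g t ≤ ⟪gradient f a, u⟫_ℝ + L * ‖u‖ ^ 2 * t := by
    intro t ht
    have hd : g t - ⟪gradient f a, u⟫_ℝ = ⟪gradient f (a + t • u) - gradient f a, u⟫_ℝ := by
      simp [hg, inner_sub_left]
    have h1 : ⟪gradient f (a + t • u) - gradient f a, u⟫_ℝ ≤
        ‖gradient f (a + t • u) - gradient f a‖ * ‖u‖ := real_inner_le_norm _ _
    have h2 : ‖gradient f (a + t • u) - gradient f a‖ ≤ L * (t * ‖u‖) := by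
      have := hlip (a + t • u) a
      simpa [norm_smul, abs_of_nonneg ht.1] using this
    nlinarith [norm_nonneg u, ht.1, mul_nonneg (mul_nonneg hL ht.1) (norm_nonneg u)]
  have hint : ∫ t in (0:ℝ)..1, g t ≤ ∫ t in (0:ℝ)..1, (⟪gradient f a, u⟫_ℝ + L * ‖u‖ ^ 2 * t) := by
    apply intervalIntegral.integral_mono_on zero_le_one
      (hgcont.intervalIntegrable 0 1)
      ((continuous_const.add (continuous_const.mul continuous_id)).intervalIntegrable 0 1)
    intro t ht
    exact hbound t ht
  have hrhs : ∫ t in (0:ℝ)..1, (⟪gradient f a, u⟫_ℝ + L * ‖u‖ ^ 2 * t)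
      = ⟪gradient f a, u⟫_ℝ + L / 2 * ‖u‖ ^ 2 := by
    have hi2 : IntervalIntegrable (fun t : ℝ => L * ‖u‖ ^ 2 * t) MeasureTheory.volume 0 1 :=
      (continuous_const.mul continuous_id).intervalIntegrable 0 1
    rw [intervalIntegral.integral_add intervalIntegrable_const hi2,
      intervalIntegral.integral_const_mul, integral_id]
    simp
    ring
  have h01 : f (a + (1:ℝ) • u) = f b := by simp [hu]
  have h00 : f (a + (0:ℝ) • u) = f a := by simp
  rw [h01, h00] at hftc
  linarith [hftc, hint, hrhs.le, hrhs.ge]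


lemma strong_min {n : ℕ} {β lam : ℝ} (hβ : 0 < β) (hlam : 0 ≤ lam)
    {c y xs : Vec n} {w : Fin n → ℝ} (hw : ∀ i, 0 ≤ w i)
    {S : Vec n → ℝ}
    (hS : ∀ z, S z = ⟪c, z⟫_ℝ + β / 2 * ‖z - y‖ ^ 2 + lam * ∑ i, w i * |z i|)
    (hmin : ∀ z, z ≠ xs → S xs < S z) (z : Vec n) :
    S xs + β / 2 * ‖z - xs‖ ^ 2 ≤ S z := by
  by_cases hz : z = xs
  · simp [hz]
  set u : Vec n := z - xs with hud
  have hu : u ≠ 0 := sub_ne_zero.mpr hz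
  have hun : (0:ℝ) < ‖u‖ ^ 2 := pow_pos (norm_pos_iff.mpr hu) 2
  set ℓ : ℝ := ⟪c, u⟫_ℝ + β * ⟪u, xs - y⟫_ℝ + lam * ∑ i, w i * (|z i| - |xs i|) with hld
  -- decomposition of S z
  have hzdec : z = xs + u := by simp [hud]
  have hnorm : ‖z - y‖ ^ 2 = ‖u‖ ^ 2 + 2 * ⟪u, xs - y⟫_ℝ + ‖xs - y‖ ^ 2 := by
    have : z - y = u + (xs - y) := by simp [hud]
    rw [this, norm_add_sq_real]
  have hinner : ⟪c, z⟫_ℝ = ⟪c, xs⟫_ℝ + ⟪c, u⟫_ℝ := by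
    rw [hzdec, inner_add_right]
  have hsum : (∑ i, w i * |z i|) = (∑ i, w i * |xs i|) + ∑ i, w i * (|z i| - |xs i|) := by
    rw [← Finset.sum_add_distrib]; congr 1; ext i; ring
  have claim1 : S z = S xs + β / 2 * ‖u‖ ^ 2 + ℓ := by
    rw [hS z, hS xs, hnorm, hinner, hsum, hld]; ring
  -- the key inequality along the segment
  have claim2 : ∀ t : ℝ, 0 < t → t ≤ 1 →
      S (xs + t • u) ≤ S xs + t * ℓ + t ^ 2 * (β / 2) * ‖u‖ ^ 2 := by
    intro t ht0 ht1
    have hinner2 : ⟪c, xs + t • u⟫_ℝ = ⟪c, xs⟫_ℝ + t * ⟪c, u⟫_ℝ := by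
      rw [inner_add_right, real_inner_smul_right]
    have hnorm2 : ‖xs + t • u - y‖ ^ 2
        = t ^ 2 * ‖u‖ ^ 2 + 2 * t * ⟪u, xs - y⟫_ℝ + ‖xs - y‖ ^ 2 := by
      have he : xs + t • u - y = t • u + (xs - y) := by abel
      rw [he, norm_add_sq_real, norm_smul, real_inner_smul_left]
      rw [mul_pow, Real.norm_eq_abs, sq_abs]
      ring
    have habs : ∀ i, w i * |(xs + t • u) i| ≤ w i * (|xs i| + t * (|z i| - |xs i|)) := by
      intro i
      apply mul_le_mul_of_nonneg_left _ (hw i)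
      have hco : (xs + t • u) i = (1 - t) * xs i + t * z i := by
        simp [hud, PiLp.add_apply, PiLp.smul_apply, PiLp.sub_apply, smul_eq_mul]
        ring
      rw [hco]
      calc |(1 - t) * xs i + t * z i| ≤ |(1 - t) * xs i| + |t * z i| := abs_add_le _ _
        _ = (1 - t) * |xs i| + t * |z i| := by
            rw [abs_mul, abs_mul, abs_of_nonneg (by linarith : (0:ℝ) ≤ 1 - t),
              abs_of_nonneg ht0.le]
        _ = |xs i| + t * (|z i| - |xs i|) := by ring
    have hsum2 : (∑ i, w i * |(xs + t • u) i|)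
        ≤ (∑ i, w i * |xs i|) + t * ∑ i, w i * (|z i| - |xs i|) := by
      calc (∑ i, w i * |(xs + t • u) i|) ≤ ∑ i, w i * (|xs i| + t * (|z i| - |xs i|)) :=
            Finset.sum_le_sum fun i _ => habs i
        _ = (∑ i, w i * |xs i|) + t * ∑ i, w i * (|z i| - |xs i|) := by
            rw [Finset.mul_sum, ← Finset.sum_add_distrib]; congr 1; ext i; ring
    rw [hS (xs + t • u), hS xs, hinner2, hnorm2, hld]
    have := mul_le_mul_of_nonneg_left hsum2 hlam
    nlinarith [this]
  -- conclude
  by_contra hcon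
  push_neg at hcon
  have hl : ℓ < 0 := by rw [claim1] at hcon; linarith
  set t : ℝ := min 1 (-ℓ / (β * ‖u‖ ^ 2)) with htd
  have ht0 : 0 < t := by
    exact lt_min one_pos (div_pos (by linarith) (by positivity))
  have ht1 : t ≤ 1 := min_le_left _ _
  have htb : t * (β * ‖u‖ ^ 2) ≤ -ℓ := by
    have : t ≤ -ℓ / (β * ‖u‖ ^ 2) := min_le_right _ _
    rw [le_div_iff₀ (by positivity)] at this
    linarith
  have hne : xs + t • u ≠ xs := by
    intro hcontra
    apply hu
    have : t • u = 0 := by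
      have := hcontra
      simpa [add_eq_left] using this
    rcases smul_eq_zero.mp this with h | h
    · exact absurd h (ne_of_gt ht0)
    · exact h
  have h1 := hmin _ hne
  have h2 := claim2 t ht0 ht1
  nlinarith [h1, h2, ht0, hl]

end Aux

variable {n : ℕ} {p lam β Lf μ αbar : ℝ} {f : Vec n → ℝ}
    {x y : ℕ → Vec n} {ε : ℕ → Fin n → ℝ} {α : ℕ → ℝ}

lemma eps_pos (H : EIRL1 n p lam β Lf μ αbar f x y ε α) (k : ℕ) (i : Fin n) : 0 < ε k i := by
  cases k with
  | zero => exact H.hε0 i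
  | succ m => exact H.hεpos m i

lemma step_ineq (H : EIRL1 n p lam β Lf μ αbar f x y ε α) (k : ℕ) :
    Fobj n p lam f (x (k+1)) (ε (k+1)) + β / 2 * ‖x (k+1) - x k‖ ^ 2
      ≤ Fobj n p lam f (x k) (ε k) + β / 2 * ‖x k - x (k-1)‖ ^ 2 := by
  have hβpos : 0 < β := lt_of_le_of_lt H.hLf H.hβ
  set w : Fin n → ℝ := fun i => p * (|x k i| + ε k i) ^ (p - 1) with hwdef
  have hbase : ∀ i, 0 < |x k i| + ε k i := fun i =>
    add_pos_of_nonneg_of_pos (abs_nonneg _) (eps_pos H k i)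
  have hw : ∀ i, 0 ≤ w i := fun i =>
    mul_nonneg H.hp0.le (Real.rpow_nonneg (hbase i).le _)
  have hdes := descent_lemma H.hdiff H.hLf H.hlip (y k) (x (k+1))
  have hcv := conv_grad H.hconv H.hdiff (y k) (x k)
  have hsm := strong_min (n := n) hβpos H.hlam.le hw
      (S := subObj n p lam β f (x k) (y k) (ε k)) (fun z => rfl) (H.hmin k) (x k)
  -- concavity termwise
  have hconc : ∀ i, (|x (k+1) i| + ε (k+1) i) ^ p
      ≤ (|x k i| + ε k i) ^ p + w i * (|x (k+1) i| - |x k i|) := by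
    intro i
    have h1 := rpow_concave_ineq (hbase i)
      (add_nonneg (abs_nonneg (x (k+1) i)) (eps_pos H (k+1) i).le) H.hp0.le H.hp1.le
    have h2 : ε (k+1) i ≤ ε k i := by
      have := H.hεdec k i
      nlinarith [eps_pos H k i, H.hμ1, H.hμ0]
    have hwi : p * (|x k i| + ε k i) ^ (p - 1) = w i := rfl
    rw [hwi] at h1
    nlinarith [hw i, h1, mul_nonneg (hw i) (sub_nonneg.mpr h2)]
  have hconcsum : lam * ∑ i, (|x (k+1) i| + ε (k+1) i) ^ p
      ≤ lam * ∑ i, (|x k i| + ε k i) ^ p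
        + lam * ((∑ i, w i * |x (k+1) i|) - ∑ i, w i * |x k i|) := by
    have h1 : (∑ i, (|x (k+1) i| + ε (k+1) i) ^ p)
        ≤ ∑ i, ((|x k i| + ε k i) ^ p + w i * (|x (k+1) i| - |x k i|)) :=
      Finset.sum_le_sum fun i _ => hconc i
    have h2 : (∑ i, ((|x k i| + ε k i) ^ p + w i * (|x (k+1) i| - |x k i|)))
        = (∑ i, (|x k i| + ε k i) ^ p)
          + ((∑ i, w i * |x (k+1) i|) - ∑ i, w i * |x k i|) := by
      rw [Finset.sum_add_distrib, ← Finset.sum_sub_distrib]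
      congr 1; congr 1; ext i; ring
    have := mul_le_mul_of_nonneg_left (h2 ▸ h1) H.hlam.le
    linarith [this]
  -- norm identities
  have hN2 : ‖x k - y k‖ ^ 2 = (α k) ^ 2 * ‖x k - x (k-1)‖ ^ 2 := by
    have : x k - y k = -(α k • (x k - x (k-1))) := by rw [H.hy k]; abel
    rw [this, norm_neg, norm_smul, Real.norm_eq_abs, mul_pow, sq_abs]
  have hN2le : ‖x k - y k‖ ^ 2 ≤ ‖x k - x (k-1)‖ ^ 2 := by
    rw [hN2]
    have h1 : (α k) ^ 2 ≤ 1 := by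
      nlinarith [H.hα0 k, H.hα1 k, H.hαbar1]
    nlinarith [sq_nonneg ‖x k - x (k-1)‖]
  have hNx : ‖x k - x (k+1)‖ = ‖x (k+1) - x k‖ := norm_sub_rev _ _
  -- expand inner products
  have hi1 : ⟪gradient f (y k), x (k+1) - y k⟫_ℝ
      = ⟪gradient f (y k), x (k+1)⟫_ℝ - ⟪gradient f (y k), y k⟫_ℝ := inner_sub_right _ _ _
  have hi2 : ⟪gradient f (y k), x k - y k⟫_ℝ
      = ⟪gradient f (y k), x k⟫_ℝ - ⟪gradient f (y k), y k⟫_ℝ := inner_sub_right _ _ _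
  have hsub1 : subObj n p lam β f (x k) (y k) (ε k) (x (k+1))
      = ⟪gradient f (y k), x (k+1)⟫_ℝ + β / 2 * ‖x (k+1) - y k‖ ^ 2
        + lam * ∑ i, w i * |x (k+1) i| := rfl
  have hsub2 : subObj n p lam β f (x k) (y k) (ε k) (x k)
      = ⟪gradient f (y k), x k⟫_ℝ + β / 2 * ‖x k - y k‖ ^ 2
        + lam * ∑ i, w i * |x k i| := rfl
  rw [hsub1, hsub2, hNx] at hsm
  have hN1 : (0:ℝ) ≤ ‖x (k+1) - y k‖ ^ 2 := sq_nonneg _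
  show f (x (k+1)) + lam * ∑ i, (|x (k+1) i| + ε (k+1) i) ^ p + β / 2 * ‖x (k+1) - x k‖ ^ 2
      ≤ f (x k) + lam * ∑ i, (|x k i| + ε k i) ^ p + β / 2 * ‖x k - x (k-1)‖ ^ 2
  nlinarith [hdes, hcv, hsm, hconcsum, hN2le, hN1, H.hβ, hi1, hi2]

lemma H_mono (H : EIRL1 n p lam β Lf μ αbar f x y ε α) (k : ℕ) :
    Fobj n p lam f (x k) (ε k) + β / 2 * ‖x k - x (k-1)‖ ^ 2
      ≤ Fobj n p lam f (x 0) (ε 0) := by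
  induction k with
  | zero => simp
  | succ m ih => exact le_trans (step_ineq H m) ih

theorem stmt_1' (H : EIRL1 n p lam β Lf μ αbar f x y ε α) :
    (∀ k, Fobj n p lam f (x k) 0 ≤ Fobj n p lam f (x 0) (ε 0)) ∧
      Bornology.IsBounded (Set.range x) := by
  have hβpos : 0 < β := lt_of_le_of_lt H.hLf H.hβ
  have key : ∀ k, Fobj n p lam f (x k) 0 ≤ Fobj n p lam f (x 0) (ε 0) := by
    intro k
    have h1 : Fobj n p lam f (x k) 0 ≤ Fobj n p lam f (x k) (ε k) := by
      unfold Fobj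
      have : (∑ i, (|x k i| + (0 : Fin n → ℝ) i) ^ p) ≤ ∑ i, (|x k i| + ε k i) ^ p := by
        apply Finset.sum_le_sum
        intro i _
        apply Real.rpow_le_rpow (by simp [abs_nonneg]) _ H.hp0.le
        simp [Pi.zero_apply]
        exact (eps_pos H k i).le
      nlinarith [mul_le_mul_of_nonneg_left this H.hlam.le]
    have h2 : Fobj n p lam f (x k) (ε k) ≤ Fobj n p lam f (x 0) (ε 0) := by
      have := H_mono H k
      nlinarith [sq_nonneg ‖x k - x (k-1)‖, hβpos]
    linarith
  refine ⟨key, ?_⟩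
  apply H.hlevel.subset
  rintro _ ⟨k, rfl⟩
  exact key k

/-- Lemma 2.1(ii): every iterate lies in the initial level set, and the
sequence of iterates is bounded. -/
theorem stmt_1 (n : ℕ) (p lam β Lf μ αbar : ℝ) (f : Vec n → ℝ)
    (x y : ℕ → Vec n) (ε : ℕ → Fin n → ℝ) (α : ℕ → ℝ)
    (H : EIRL1 n p lam β Lf μ αbar f x y ε α) :
    (∀ k, Fobj n p lam f (x k) 0 ≤ Fobj n p lam f (x 0) (ε 0)) ∧
      Bornology.IsBounded (Set.range x) :=
  stmt_1' H
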